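/- Let a_1, a_2 be coprime integers with a_1·a_2 ≠ 0, and let (u_n) be the Lucas sequence defined by u_0 = 0, u_1 = 1, u_n = a_1·u_{n−1} + a_2·u_{n−2} for n ≥ 2; assume the sequence is nondegenerate, i.e., the ratio of the roots of X² − a_1·X − a_2 is not a root of unity. For a positive integer m coprime to a_2, let z_u(m) be the least positive integer n such that m divides u_n (which exists), and ℓ_u(m) := lcm(m, z_u(m)). Then for every positive integer k, the set A_{u,k} = {n ≥ 1 : gcd(n, u_n) = k} is nonempty if and only if gcd(k, a_2) = 1 and k = gcd(ℓ_u(k), |u_{ℓ_u(k)}|). -/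

import Mathlib

open scoped BigOperators

/-- The Lucas sequence with parameters `a1`, `a2`:
`u 0 = 0`, `u 1 = 1`, `u (n+2) = a1 * u (n+1) + a2 * u n`. -/
def lucasU (a1 a2 : ℤ) : ℕ → ℤ
  | 0 => 0
  | 1 => 1
  | n + 2 => a1 * lucasU a1 a2 (n + 1) + a2 * lucasU a1 a2 n

/-- Rank of appearance of `m` in the Lucas sequence. -/
noncomputable def lucasZ (a1 a2 : ℤ) (m : ℕ) : ℕ :=
  sInf {n : ℕ | 0 < n ∧ (m : ℤ) ∣ lucasU a1 a2 n}

/-- `lucasL a1 a2 m = lcm(m, z_u(m))`. -/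
noncomputable def lucasL (a1 a2 : ℤ) (m : ℕ) : ℕ := Nat.lcm m (lucasZ a1 a2 m)

/-- The set of positive integers `n` with `gcd(n, u_n) = k`. -/
def lucasA (a1 a2 : ℤ) (k : ℕ) : Set ℕ :=
  {n : ℕ | 0 < n ∧ Int.gcd (n : ℤ) (lucasU a1 a2 n) = k}

/-- Nondegeneracy: the ratio of the roots of `X^2 - a1*X - a2` is not a root of unity. -/
def LucasNondegenerate (a1 a2 : ℤ) : Prop :=
  ∀ α β : ℂ, α + β = (a1 : ℂ) → α * β = -(a2 : ℂ) →
    ∀ n : ℕ, 0 < n → (α / β) ^ n ≠ 1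

section
variable (a1 a2 : ℤ)

lemma lucasU_zero : lucasU a1 a2 0 = 0 := rfl
lemma lucasU_one : lucasU a1 a2 1 = 1 := rfl
lemma lucasU_add_two (n : ℕ) :
    lucasU a1 a2 (n + 2) = a1 * lucasU a1 a2 (n + 1) + a2 * lucasU a1 a2 n := rfl

lemma lucasU_addition (m n : ℕ) :
    lucasU a1 a2 (m + n + 1) =
      lucasU a1 a2 (m + 1) * lucasU a1 a2 (n + 1) + a2 * lucasU a1 a2 m * lucasU a1 a2 n := by
  induction m using Nat.twoStepInduction with
  | zero => simp [lucasU_zero, lucasU_one]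
  | one =>
    have h : 1 + n + 1 = n + 2 := by omega
    rw [h, lucasU_add_two, show (1:ℕ)+1 = 0+2 from rfl, lucasU_add_two, lucasU_one, lucasU_zero]
    ring
  | more m ih1 ih2 =>
    have h2 : m + 1 + n + 1 = (m + n + 1) + 1 := by omega
    rw [h2] at ih2
    rw [show m + 2 + n + 1 = (m + n + 1) + 2 from by omega, lucasU_add_two]
    rw [ih2, ih1, show m+2+1 = m+1+2 from rfl, lucasU_add_two a1 a2 (m+1),
      lucasU_add_two a1 a2 m]
    ring

lemma lucasU_coprime_a2 (hco : IsCoprime a1 a2) (n : ℕ) :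
    IsCoprime (lucasU a1 a2 (n + 1)) a2 := by
  induction n with
  | zero => simpa [lucasU_one] using isCoprime_one_left
  | succ n ih =>
    rw [lucasU_add_two]
    exact (hco.mul_left ih).add_mul_left_left _

lemma lucasU_coprime_succ (hco : IsCoprime a1 a2) (n : ℕ) :
    IsCoprime (lucasU a1 a2 n) (lucasU a1 a2 (n + 1)) := by
  induction n with
  | zero => simpa [lucasU_zero, lucasU_one] using isCoprime_one_right
  | succ n ih =>
    rw [lucasU_add_two]
    have h1 : IsCoprime (lucasU a1 a2 (n+1)) (a2 * lucasU a1 a2 n) :=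
      (lucasU_coprime_a2 a1 a2 hco n).mul_right ih.symm
    have := h1.add_mul_right_right a1
    rw [add_comm (a1 * _)]
    exact this
end

section
variable (a1 a2 : ℤ)

lemma lucasU_shift (hco : IsCoprime a1 a2) (m : ℕ) (hm : IsCoprime (m : ℤ) a2)
    (z n : ℕ) (hz : 0 < z) (hdz : (m : ℤ) ∣ lucasU a1 a2 z) :
    ((m : ℤ) ∣ lucasU a1 a2 (z + n) ↔ (m : ℤ) ∣ lucasU a1 a2 n) := by
  obtain ⟨w, rfl⟩ : ∃ w, z = w + 1 := ⟨z - 1, by omega⟩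
  have hadd := lucasU_addition a1 a2 w n
  have h1 : (m : ℤ) ∣ lucasU a1 a2 (w + 1) * lucasU a1 a2 (n + 1) := hdz.mul_right _
  have hcw : IsCoprime ((m : ℤ)) (lucasU a1 a2 w) :=
    (lucasU_coprime_succ a1 a2 hco w).symm.of_isCoprime_of_dvd_left hdz
  have hkey : IsCoprime ((m : ℤ)) (a2 * lucasU a1 a2 w) := (hm.mul_right hcw)
  rw [show w + 1 + n = w + n + 1 from by omega, hadd, dvd_add_right h1]
  constructor
  · intro h
    exact hkey.dvd_of_dvd_mul_left h
  · intro h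
    exact h.mul_left _

lemma lucasZ_dvd_iff (hco : IsCoprime a1 a2) (m : ℕ) (hm : IsCoprime (m : ℤ) a2)
    (hne : {n : ℕ | 0 < n ∧ (m : ℤ) ∣ lucasU a1 a2 n}.Nonempty) (t : ℕ) :
    (m : ℤ) ∣ lucasU a1 a2 t ↔ lucasZ a1 a2 m ∣ t := by
  set z := lucasZ a1 a2 m with hzdef
  have hzmem : z ∈ {n : ℕ | 0 < n ∧ (m : ℤ) ∣ lucasU a1 a2 n} := Nat.sInf_mem hne
  obtain ⟨hzpos, hzdvd⟩ := hzmem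
  constructor
  · intro h
    induction t using Nat.strong_induction_on with
    | _ t IH =>
      rcases Nat.eq_zero_or_pos t with rfl | htpos
      · exact dvd_zero z
      · have hle : z ≤ t := Nat.sInf_le ⟨htpos, h⟩
        have hsub : (m : ℤ) ∣ lucasU a1 a2 (t - z) := by
          rw [← lucasU_shift a1 a2 hco m hm z (t - z) hzpos hzdvd,
            Nat.add_sub_cancel' hle]
          exact h
        rcases Nat.eq_zero_or_pos (t - z) with heq | hpos
        · have ht : t = z := by omega
          exact ht ▸ dvd_refl z
        · have hlt : t - z < t := by omega
          have hd := IH (t - z) hlt hsub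
          have ht : t = (t - z) + z := by omega
          exact ht ▸ dvd_add hd (dvd_refl z)
  · rintro ⟨c, rfl⟩
    induction c with
    | zero => simp [lucasU_zero]
    | succ c ih =>
      rw [show z * (c + 1) = z + z * c from by ring,
        lucasU_shift a1 a2 hco m hm z (z * c) hzpos hzdvd]
      exact ih
end

theorem lucasA_nonempty_iff (a1 a2 : ℤ) (hco : IsCoprime a1 a2) (hne : a1 * a2 ≠ 0)
    (hnd : LucasNondegenerate a1 a2) (k : ℕ) (hk : 0 < k) :
    (lucasA a1 a2 k).Nonempty ↔
      (Int.gcd (k : ℤ) a2 = 1 ∧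
        k = Int.gcd (lucasL a1 a2 k : ℤ) (lucasU a1 a2 (lucasL a1 a2 k))) := by
  constructor
  · rintro ⟨n, hnpos, hgcd⟩
    have hkn : (k : ℤ) ∣ (n : ℤ) := hgcd ▸ Int.gcd_dvd_left _ _
    have hkun : (k : ℤ) ∣ lucasU a1 a2 n := hgcd ▸ Int.gcd_dvd_right _ _
    obtain ⟨n', rfl⟩ : ∃ n', n = n' + 1 := ⟨n - 1, by omega⟩
    have hkco : IsCoprime ((k : ℤ)) a2 :=
      (lucasU_coprime_a2 a1 a2 hco n').of_isCoprime_of_dvd_left hkun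
    refine ⟨Int.isCoprime_iff_gcd_eq_one.mp hkco, ?_⟩
    set n := n' + 1
    have hSne : {t : ℕ | 0 < t ∧ (k : ℤ) ∣ lucasU a1 a2 t}.Nonempty := ⟨n, hnpos, hkun⟩
    have hziff := lucasZ_dvd_iff a1 a2 hco k hkco hSne
    have hzn : lucasZ a1 a2 k ∣ n := (hziff n).mp hkun
    have hknnat : k ∣ n := Int.natCast_dvd_natCast.mp hkn
    set ℓ := lucasL a1 a2 k with hldef
    have hln : ℓ ∣ n := Nat.lcm_dvd hknnat hzn
    have hzmem := Nat.sInf_mem hSne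
    have hlpos : 0 < ℓ := Nat.pos_of_ne_zero
      (Nat.lcm_ne_zero (by omega) (by exact Nat.pos_iff_ne_zero.mp hzmem.1))
    have hkl : k ∣ ℓ := Nat.dvd_lcm_left _ _
    have hkul : (k : ℤ) ∣ lucasU a1 a2 ℓ := (hziff ℓ).mpr (Nat.dvd_lcm_right _ _)
    set d := Int.gcd (ℓ : ℤ) (lucasU a1 a2 ℓ) with hddef
    have hkd : k ∣ d := by
      have : (k : ℤ) ∣ (d : ℤ) := Int.dvd_coe_gcd (Int.natCast_dvd_natCast.mpr hkl) hkul
      exact_mod_cast this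
    have hdul : (d : ℤ) ∣ lucasU a1 a2 ℓ := Int.gcd_dvd_right _ _
    have hdl : (d : ℤ) ∣ (ℓ : ℤ) := Int.gcd_dvd_left _ _
    obtain ⟨l', hl'⟩ : ∃ l', ℓ = l' + 1 := ⟨ℓ - 1, by omega⟩
    have hdco : IsCoprime ((d : ℤ)) a2 :=
      (lucasU_coprime_a2 a1 a2 hco l').of_isCoprime_of_dvd_left (hl' ▸ hdul)
    have hSd : {t : ℕ | 0 < t ∧ (d : ℤ) ∣ lucasU a1 a2 t}.Nonempty := ⟨ℓ, hlpos, hdul⟩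
    have hdiff := lucasZ_dvd_iff a1 a2 hco d hdco hSd
    have hzdl : lucasZ a1 a2 d ∣ ℓ := (hdiff ℓ).mp hdul
    have hdun : (d : ℤ) ∣ lucasU a1 a2 n := (hdiff n).mpr (hzdl.trans hln)
    have hdn : (d : ℤ) ∣ (n : ℤ) := hdl.trans (Int.natCast_dvd_natCast.mpr hln)
    have hdk : (d : ℤ) ∣ (k : ℤ) := hgcd ▸ Int.dvd_coe_gcd hdn hdun
    exact Nat.dvd_antisymm hkd (Int.natCast_dvd_natCast.mp hdk)
  · rintro ⟨-, heq⟩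
    refine ⟨lucasL a1 a2 k, ?_, heq.symm⟩
    rcases Nat.eq_zero_or_pos (lucasL a1 a2 k) with h0 | hpos
    · rw [h0] at heq
      simp [lucasU_zero] at heq
      omega
    · exact hpos
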